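/- In the proof of Proposition 2 (average satisfaction for EJR under matroid constraints), the following key lemma holds: if S deserves ℓ candidates in an election with matroid constraints, and S' ⊆ S satisfies |S'| ≥ |S| − i·|S|/ℓ for some natural number i ∈ {0,1,…,ℓ}, then S' deserves ℓ − i candidates. -/

import Mathlib

/-- A group `S` deserves `ℓ` candidates. -/
def Deserves {C N : Type*} [DecidableEq C] [Fintype N] (F : Set (Finset C))
    (A : N → Finset C) (S : Finset N) (ℓ : ℕ) : Prop :=
  ∀ T ∈ F, (∃ X : Finset C, (∀ i ∈ S, X ⊆ A i) ∧ ℓ ≤ X.card ∧ T ∪ X ∈ F) ∨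
    (S.card : ℝ) / (Fintype.card N : ℝ) > (ℓ : ℝ) / ((T.card : ℝ) + (ℓ : ℝ))

/-- Matroid extension: any independent `Z` can be extended inside `Z ∪ Y`
to an independent set of size at least `Y.card`. -/
lemma extend_lemma {C : Type*} [DecidableEq C] (F : Set (Finset C))
    (hex : ∀ X ∈ F, ∀ Y ∈ F, X.card < Y.card → ∃ c ∈ Y \ X, insert c X ∈ F) :
    ∀ (k : ℕ) (Z : Finset C), Z ∈ F → ∀ Y ∈ F, Y.card ≤ Z.card + k →
      ∃ Z' ∈ F, Z ⊆ Z' ∧ Z' ⊆ Z ∪ Y ∧ Y.card ≤ Z'.card := by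
  intro k
  induction k with
  | zero =>
      intro Z hZ Y hY h
      exact ⟨Z, hZ, subset_rfl, Finset.subset_union_left, by omega⟩
  | succ k ih =>
      intro Z hZ Y hY h
      by_cases hle : Y.card ≤ Z.card
      · exact ⟨Z, hZ, subset_rfl, Finset.subset_union_left, hle⟩
      · obtain ⟨c, hc, hins⟩ := hex Z hZ Y hY (by omega)
        have hcY : c ∈ Y := (Finset.mem_sdiff.mp hc).1
        have hcZ : c ∉ Z := (Finset.mem_sdiff.mp hc).2
        obtain ⟨Z', hZ'F, hsub, hsub2, hcard⟩ := ih (insert c Z) hins Y hY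
          (by rw [Finset.card_insert_of_notMem hcZ]; omega)
        refine ⟨Z', hZ'F, (Finset.subset_insert c Z).trans hsub, ?_, hcard⟩
        intro x hx
        have := hsub2 hx
        simp only [Finset.mem_union, Finset.mem_insert] at this ⊢
        rcases this with (rfl | h) | h
        · exact Or.inr hcY
        · exact Or.inl h
        · exact Or.inr h

/-- Key lemma of Proposition 2: under matroid constraints, if `S` deserves `ℓ`
candidates and `S' ⊆ S` with `|S'| ≥ |S| − i·|S|/ℓ` for `i ∈ {0,…,ℓ}`,
then `S'` deserves `ℓ − i` candidates. -/
theorem stmt9 {C N : Type*} [DecidableEq C] [Fintype N]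
    (F : Set (Finset C)) (A : N → Finset C)
    (hne : F.Nonempty) (hdc : ∀ X ∈ F, ∀ Y : Finset C, Y ⊆ X → Y ∈ F)
    (hex : ∀ X ∈ F, ∀ Y ∈ F, X.card < Y.card → ∃ c ∈ Y \ X, insert c X ∈ F)
    (S S' : Finset N) (ℓ i : ℕ) (hi : i ≤ ℓ) (hsub : S' ⊆ S)
    (hcard : (S.card : ℝ) - (i : ℝ) * (S.card : ℝ) / (ℓ : ℝ) ≤ (S'.card : ℝ))
    (hdes : Deserves F A S ℓ) :
    Deserves F A S' (ℓ - i) := by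
  intro T hT
  by_cases h0 : ℓ - i = 0
  · left
    exact ⟨∅, fun j _ => Finset.empty_subset _, by omega, by simpa using hT⟩
  have hiℓ : i < ℓ := by omega
  have hℓ : 0 < ℓ := by omega
  obtain ⟨T', hT'sub, hT'card⟩ := Finset.exists_subset_card_eq (s := T) (n := T.card - i) (Nat.sub_le _ _)
  have hT'F : T' ∈ F := hdc T hT T' hT'sub
  rcases hdes T' hT'F with ⟨X, hXA, hXcard, hTXF⟩ | hbig
  · -- exists-X case: extend T inside T' ∪ X
    left
    obtain ⟨Z', hZ'F, hTZ', hZ'sub, hZ'card⟩ :=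
      extend_lemma F hex (T' ∪ X).card T hT (T' ∪ X) hTXF (by omega)
    have hZ'subTX : Z' ⊆ T ∪ X := by
      intro x hx
      rcases Finset.mem_union.mp (hZ'sub hx) with h | h
      · exact Finset.mem_union_left _ h
      · rcases Finset.mem_union.mp h with h2 | h2
        · exact Finset.mem_union_left _ (hT'sub h2)
        · exact Finset.mem_union_right _ h2
    refine ⟨(Z' \ T) ∪ (X ∩ T), ?_, ?_, ?_⟩
    · intro j hj
      have hX'X : (Z' \ T) ∪ (X ∩ T) ⊆ X := by
        intro x hx
        rcases Finset.mem_union.mp hx with h | h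
        · rcases Finset.mem_union.mp (hZ'subTX (Finset.mem_sdiff.mp h).1) with h2 | h2
          · exact absurd h2 (Finset.mem_sdiff.mp h).2
          · exact h2
        · exact (Finset.mem_inter.mp h).1
      exact hX'X.trans (hXA j (hsub hj))
    · -- cardinality bound
      have hdis : Disjoint (Z' \ T) (X ∩ T) :=
        Finset.sdiff_disjoint.mono_right Finset.inter_subset_right
      have e1 : ((Z' \ T) ∪ (X ∩ T)).card = (Z' \ T).card + (X ∩ T).card :=
        Finset.card_union_of_disjoint hdis
      have e2 : (Z' \ T).card = Z'.card - T.card := Finset.card_sdiff_of_subset hTZ'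
      have e2' : T.card ≤ Z'.card := Finset.card_le_card hTZ'
      have e3 : (X ∩ T).card + (X \ T).card = X.card := Finset.card_inter_add_card_sdiff X T
      have e4 : T'.card + (X \ T).card ≤ Z'.card := by
        have hd : Disjoint T' (X \ T) :=
          (Finset.sdiff_disjoint.mono_right hT'sub).symm
        have hsub' : T' ∪ (X \ T) ⊆ T' ∪ X :=
          Finset.union_subset_union_right Finset.sdiff_subset
        calc T'.card + (X \ T).card = (T' ∪ (X \ T)).card :=
              (Finset.card_union_of_disjoint hd).symm
          _ ≤ (T' ∪ X).card := Finset.card_le_card hsub'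
          _ ≤ Z'.card := hZ'card
      omega
    · -- T ∪ X' ∈ F
      have heq : T ∪ ((Z' \ T) ∪ (X ∩ T)) = Z' := by
        rw [← Finset.union_assoc, Finset.union_sdiff_of_subset hTZ',
          Finset.union_eq_left.mpr (Finset.inter_subset_right.trans hTZ')]
      rw [heq]; exact hZ'F
  · -- fraction case
    right
    have hℓR : (0 : ℝ) < (ℓ : ℝ) := by exact_mod_cast hℓ
    have hDpos : (0 : ℝ) < (T'.card : ℝ) + (ℓ : ℝ) := by positivity
    have hrpos : (0 : ℝ) < (ℓ : ℝ) / ((T'.card : ℝ) + (ℓ : ℝ)) := div_pos hℓR hDpos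
    have hSpos : (0 : ℝ) < (S.card : ℝ) / (Fintype.card N : ℝ) := lt_trans hrpos hbig
    have hNpos : (0 : ℝ) < (Fintype.card N : ℝ) := by
      rcases (Nat.cast_nonneg (Fintype.card N) : (0:ℝ) ≤ _).eq_or_lt with h | h
      · rw [← h, div_zero] at hSpos; exact absurd hSpos (lt_irrefl 0)
      · exact h
    have hiT : i ≤ T.card := by
      by_contra hlt
      have h0' : T'.card = 0 := by omega
      have hle1 : (S.card : ℝ) / (Fintype.card N : ℝ) ≤ 1 := by
        rw [div_le_one hNpos]
        exact_mod_cast Finset.card_le_univ S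
      rw [h0'] at hbig
      simp only [Nat.cast_zero, zero_add] at hbig
      rw [div_self (ne_of_gt hℓR)] at hbig
      linarith
    have hT'c : (T'.card : ℝ) = (T.card : ℝ) - (i : ℝ) := by
      rw [hT'card, Nat.cast_sub hiT]
    have hkey : (T.card : ℝ) + ((ℓ - i : ℕ) : ℝ) = (T'.card : ℝ) + (ℓ : ℝ) := by
      rw [hT'c, Nat.cast_sub hi]; ring
    have hli : ((ℓ - i : ℕ) : ℝ) = (ℓ : ℝ) - (i : ℝ) := by rw [Nat.cast_sub hi]
    rw [gt_iff_lt, hkey, hli, div_lt_div_iff₀ hDpos hNpos]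
    have hA : (ℓ : ℝ) * (Fintype.card N : ℝ) < (S.card : ℝ) * ((T'.card : ℝ) + (ℓ : ℝ)) := by
      rw [gt_iff_lt, div_lt_div_iff₀ hDpos hNpos] at hbig
      exact hbig
    have hB : (S.card : ℝ) * ((ℓ : ℝ) - (i : ℝ)) ≤ (ℓ : ℝ) * (S'.card : ℝ) := by
      have h1 := mul_le_mul_of_nonneg_right hcard hℓR.le
      rw [sub_mul, div_mul_cancel₀ _ (ne_of_gt hℓR)] at h1
      nlinarith
    have hlipos : (0 : ℝ) < (ℓ : ℝ) - (i : ℝ) := by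
      have : (i : ℝ) < (ℓ : ℝ) := by exact_mod_cast hiℓ
      linarith
    nlinarith [mul_lt_mul_of_pos_left hA hlipos,
      mul_le_mul_of_nonneg_right hB hDpos.le]
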